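/- The entropy of the Gács–Körner maximal common function is invariant under sufficient statistic substitution: if X → g₁(X) → Y and X → g₂(Y) → Y, then H(mcf(X, Y)) = H(mcf(g₁(X), g₂(Y))). -/

import Mathlib

open scoped Classical
open Finset Real

noncomputable section

variable {Ω : Type*} [Fintype Ω]

/-- Pushforward probability of value `x` under random variable `X` w.r.t. pmf `p`. -/
def dist' {α : Type*} (p : Ω → ℝ) (X : Ω → α) (x : α) : ℝ :=
  ∑ ω, if X ω = x then p ω else 0

/-- Shannon entropy, base 2. -/
def ent {α : Type*} [Fintype α] (p : Ω → ℝ) (X : Ω → α) : ℝ :=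
  -∑ x, dist' p X x * Real.logb 2 (dist' p X x)

/-- Conditional entropy `H(X | Y)`. -/
def condEnt {α β : Type*} [Fintype α] [Fintype β] (p : Ω → ℝ) (X : Ω → α) (Y : Ω → β) : ℝ :=
  ent p (fun ω => (X ω, Y ω)) - ent p Y

/-- Mutual information `I(X ∧ Y)`. -/
def mi {α β : Type*} [Fintype α] [Fintype β] (p : Ω → ℝ) (X : Ω → α) (Y : Ω → β) : ℝ :=
  ent p X + ent p Y - ent p (fun ω => (X ω, Y ω))

/-- Conditional mutual information `I(X ∧ Y | Z)`. -/
def cmi {α β γ : Type*} [Fintype α] [Fintype β] [Fintype γ]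
    (p : Ω → ℝ) (X : Ω → α) (Y : Ω → β) (Z : Ω → γ) : ℝ :=
  ent p (fun ω => (X ω, Z ω)) + ent p (fun ω => (Y ω, Z ω))
    - ent p (fun ω => ((X ω, Y ω), Z ω)) - ent p Z

/-- `p` is a probability mass function on `Ω`. -/
def IsPMF (p : Ω → ℝ) : Prop := (∀ ω, 0 ≤ p ω) ∧ ∑ ω, p ω = 1

/-- `B` is almost surely a function of `A`. -/
def asFun {α β : Type*} (p : Ω → ℝ) (A : Ω → α) (B : Ω → β) : Prop :=
  ∃ f : α → β, (∑ ω, if f (A ω) = B ω then p ω else 0) = 1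

/-- `M` is a Gács–Körner maximal common function of `X` and `Y`. -/
def IsMCF {α β γ : Type*} (p : Ω → ℝ) (X : Ω → α) (Y : Ω → β) (M : Ω → γ) : Prop :=
  asFun p X M ∧ asFun p Y M ∧
  ∀ (δ : Type) (V : Ω → δ), asFun p X V → asFun p Y V → asFun p M V

section Helpers

variable {Ω : Type*} [Fintype Ω]

lemma dist'_nonneg {α : Type*} {p : Ω → ℝ} (h0 : ∀ ω, 0 ≤ p ω) (A : Ω → α) (x : α) :
    0 ≤ dist' p A x := by
  refine Finset.sum_nonneg fun ω _ => ?_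
  split <;> simp [h0 ω]

lemma sum_dist' {α : Type*} [Fintype α] (p : Ω → ℝ) (A : Ω → α) :
    ∑ x, dist' p A x = ∑ ω, p ω := by
  unfold dist'
  rw [Finset.sum_comm]
  exact Finset.sum_congr rfl fun ω _ => by simp

lemma single_le_dist' {α : Type*} {p : Ω → ℝ} (h0 : ∀ ω, 0 ≤ p ω) (A : Ω → α) (ω₀ : Ω) :
    p ω₀ ≤ dist' p A (A ω₀) := by
  have := Finset.single_le_sum (f := fun ω => if A ω = A ω₀ then p ω else 0)
    (fun ω _ => by split <;> simp [h0 ω]) (Finset.mem_univ ω₀)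
  simpa [dist'] using this

lemma asFun_iff {α β : Type*} {p : Ω → ℝ} (hp : IsPMF p) (A : Ω → α) (B : Ω → β) :
    asFun p A B ↔ ∃ f : α → β, ∀ ω, p ω ≠ 0 → f (A ω) = B ω := by
  constructor
  · rintro ⟨f, hf⟩
    refine ⟨f, fun ω hω => ?_⟩
    have h : ∑ ω, (p ω - if f (A ω) = B ω then p ω else 0) = 0 := by
      rw [Finset.sum_sub_distrib, hf, hp.2, sub_self]
    have h2 := (Finset.sum_eq_zero_iff_of_nonneg (fun ω _ => by
      split <;> simp [hp.1 ω])).mp h ω (Finset.mem_univ ω)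
    by_contra hc
    rw [if_neg hc] at h2
    exact hω (by linarith)
  · rintro ⟨f, hf⟩
    refine ⟨f, ?_⟩
    rw [← hp.2]
    refine Finset.sum_congr rfl fun ω _ => ?_
    by_cases hω : p ω = 0
    · simp [hω]
    · rw [if_pos (hf ω hω)]

end Helpers
section Helpers2

variable {Ω : Type*} [Fintype Ω]

lemma dist'_congr_ae {α : Type*} {p : Ω → ℝ} {A A' : Ω → α}
    (h : ∀ ω, p ω ≠ 0 → A ω = A' ω) (x : α) : dist' p A x = dist' p A' x := by
  refine Finset.sum_congr rfl fun ω _ => ?_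
  by_cases hω : p ω = 0
  · simp [hω]
  · rw [h ω hω]

lemma ent_congr_ae {α : Type*} [Fintype α] {p : Ω → ℝ} {A A' : Ω → α}
    (h : ∀ ω, p ω ≠ 0 → A ω = A' ω) : ent p A = ent p A' := by
  unfold ent
  congr 1
  exact Finset.sum_congr rfl fun x _ => by rw [dist'_congr_ae h]

lemma dist'_comp_inj {α β : Type*} {p : Ω → ℝ} {A : Ω → α} {φ : α → β}
    (hφ : Function.Injective φ) (a : α) :
    dist' p (fun ω => φ (A ω)) (φ a) = dist' p A a := by
  refine Finset.sum_congr rfl fun ω _ => ?_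
  simp [hφ.eq_iff]

lemma dist'_comp_not_mem {α β : Type*} {p : Ω → ℝ} {A : Ω → α} {φ : α → β} {y : β}
    (hy : ∀ a, φ a ≠ y) : dist' p (fun ω => φ (A ω)) y = 0 := by
  refine Finset.sum_eq_zero fun ω _ => ?_
  rw [if_neg (hy (A ω))]

lemma ent_comp_inj {α β : Type*} [Fintype α] [Fintype β] {p : Ω → ℝ} {A : Ω → α} {φ : α → β}
    (hφ : Function.Injective φ) : ent p (fun ω => φ (A ω)) = ent p A := by
  unfold ent
  congr 1
  have h1 : ∑ y : β, dist' p (fun ω => φ (A ω)) y * Real.logb 2 (dist' p (fun ω => φ (A ω)) y)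
      = ∑ y ∈ Finset.image φ Finset.univ,
          dist' p (fun ω => φ (A ω)) y * Real.logb 2 (dist' p (fun ω => φ (A ω)) y) := by
    refine (Finset.sum_subset (Finset.subset_univ _) fun y _ hy => ?_).symm
    have : ∀ a, φ a ≠ y := fun a ha => hy (Finset.mem_image.mpr ⟨a, Finset.mem_univ a, ha⟩)
    rw [dist'_comp_not_mem this]
    simp
  rw [h1, Finset.sum_image (fun a _ b _ h => hφ h)]
  exact Finset.sum_congr rfl fun a _ => by rw [dist'_comp_inj hφ]

lemma ent_pair_of_asFun {α β : Type*} [Fintype α] [Fintype β] {p : Ω → ℝ} (hp : IsPMF p)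
    {A : Ω → α} {B : Ω → β} (h : asFun p A B) :
    ent p (fun ω => (A ω, B ω)) = ent p A := by
  obtain ⟨f, hf⟩ := (asFun_iff hp A B).mp h
  have h1 : ent p (fun ω => (A ω, B ω)) = ent p (fun ω => (A ω, f (A ω))) :=
    ent_congr_ae fun ω hω => by rw [hf ω hω]
  rw [h1]
  exact ent_comp_inj (φ := fun a => (a, f a)) fun a b hab => congrArg Prod.fst hab

lemma ent_eq_of_asFun_asFun {α β : Type*} [Fintype α] [Fintype β] {p : Ω → ℝ} (hp : IsPMF p)
    {A : Ω → α} {B : Ω → β} (h1 : asFun p A B) (h2 : asFun p B A) :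
    ent p A = ent p B := by
  rw [← ent_pair_of_asFun hp h1, ← ent_pair_of_asFun hp h2]
  exact (ent_comp_inj (A := fun ω => (A ω, B ω)) (φ := Prod.swap) Prod.swap_injective).symm

end Helpers2
section Helpers3

variable {Ω : Type*} [Fintype Ω]

lemma marg_snd3 {α β ζ : Type*} [Fintype β] (p : Ω → ℝ)
    (A : Ω → α) (B : Ω → β) (C : Ω → ζ) (x : α) (z : ζ) :
    dist' p (fun ω => (A ω, C ω)) (x, z)
      = ∑ y, dist' p (fun ω => ((A ω, B ω), C ω)) ((x, y), z) := by
  unfold dist'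
  rw [Finset.sum_comm]
  refine Finset.sum_congr rfl fun ω _ => ?_
  simp only [Prod.mk.injEq]
  by_cases hx : A ω = x ∧ C ω = z
  · simp [hx.1, hx.2]
  · rw [if_neg hx]
    exact (Finset.sum_eq_zero fun y _ => by rw [if_neg (by tauto)]).symm

lemma marg_fst3 {α β ζ : Type*} [Fintype α] (p : Ω → ℝ)
    (A : Ω → α) (B : Ω → β) (C : Ω → ζ) (y : β) (z : ζ) :
    dist' p (fun ω => (B ω, C ω)) (y, z)
      = ∑ x, dist' p (fun ω => ((A ω, B ω), C ω)) ((x, y), z) := by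
  unfold dist'
  rw [Finset.sum_comm]
  refine Finset.sum_congr rfl fun ω _ => ?_
  simp only [Prod.mk.injEq]
  by_cases hx : B ω = y ∧ C ω = z
  · simp [hx.1, hx.2]
  · rw [if_neg hx]
    exact (Finset.sum_eq_zero fun x _ => by rw [if_neg (by tauto)]).symm

lemma marg_fst2 {α ζ : Type*} [Fintype α] (p : Ω → ℝ)
    (A : Ω → α) (C : Ω → ζ) (z : ζ) :
    dist' p C z = ∑ x, dist' p (fun ω => (A ω, C ω)) (x, z) := by
  unfold dist'
  rw [Finset.sum_comm]
  refine Finset.sum_congr rfl fun ω _ => ?_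
  simp only [Prod.mk.injEq]
  by_cases hx : C ω = z
  · simp [hx]
  · rw [if_neg hx]
    exact (Finset.sum_eq_zero fun x _ => by rw [if_neg (by tauto)]).symm

end Helpers3
section Helpers4

variable {Ω : Type*} [Fintype Ω]

lemma log2_ne : Real.log 2 ≠ 0 := ne_of_gt (Real.log_pos (by norm_num))

lemma ent_mul_log2 {α : Type*} [Fintype α] (p : Ω → ℝ) (A : Ω → α) :
    ent p A * Real.log 2 = -∑ x, dist' p A x * Real.log (dist' p A x) := by
  unfold ent Real.logb
  rw [neg_mul, Finset.sum_mul, neg_inj]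
  refine Finset.sum_congr rfl fun x _ => ?_
  field_simp

end Helpers4
section KL

lemma triple_sum_sub {α β ζ : Type*} [Fintype α] [Fintype β] [Fintype ζ]
    (f g : α → β → ζ → ℝ) :
    ∑ x, ∑ y, ∑ z, (f x y z - g x y z)
      = (∑ x, ∑ y, ∑ z, f x y z) - ∑ x, ∑ y, ∑ z, g x y z := by
  simp [Finset.sum_sub_distrib]

lemma triple_sum_le {α β ζ : Type*} [Fintype α] [Fintype β] [Fintype ζ]
    {f g : α → β → ζ → ℝ} (h : ∀ x y z, f x y z ≤ g x y z) :
    ∑ x, ∑ y, ∑ z, f x y z ≤ ∑ x, ∑ y, ∑ z, g x y z :=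
  Finset.sum_le_sum fun x _ => Finset.sum_le_sum fun y _ =>
    Finset.sum_le_sum fun z _ => h x y z

lemma triple_sum_eq_zero {α β ζ : Type*} [Fintype α] [Fintype β] [Fintype ζ]
    {f : α → β → ζ → ℝ} (h0 : ∀ x y z, 0 ≤ f x y z)
    (h : ∑ x, ∑ y, ∑ z, f x y z = 0) : ∀ x y z, f x y z = 0 := by
  intro x y z
  have h1 : ∀ x' ∈ Finset.univ, (0:ℝ) ≤ ∑ y', ∑ z', f x' y' z' :=
    fun x' _ => Finset.sum_nonneg fun y' _ => Finset.sum_nonneg fun z' _ => h0 x' y' z'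
  have h2 := (Finset.sum_eq_zero_iff_of_nonneg h1).mp h x (Finset.mem_univ x)
  have h3 := (Finset.sum_eq_zero_iff_of_nonneg
    (fun y' _ => Finset.sum_nonneg fun z' _ => h0 x y' z')).mp h2 y (Finset.mem_univ y)
  exact (Finset.sum_eq_zero_iff_of_nonneg (fun z' _ => h0 x y z')).mp h3 z (Finset.mem_univ z)

lemma kl_support {α β ζ : Type*} [Fintype α] [Fintype β] [Fintype ζ]
    (a : α → β → ζ → ℝ) (pxz : α → ζ → ℝ) (pyz : β → ζ → ℝ) (pz : ζ → ℝ)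
    (a0 : ∀ x y z, 0 ≤ a x y z)
    (hpxz : ∀ x z, pxz x z = ∑ y, a x y z)
    (hpyz : ∀ y z, pyz y z = ∑ x, a x y z)
    (hpz : ∀ z, pz z = ∑ x, pxz x z)
    (hpz' : ∀ z, pz z = ∑ y, pyz y z)
    (suma : ∑ x, ∑ y, ∑ z, a x y z = 1)
    (sumpz : ∑ z, pz z = 1)
    (hsum : ∑ x, ∑ y, ∑ z, (a x y z * Real.log (a x y z) + a x y z * Real.log (pz z)
        - a x y z * Real.log (pxz x z) - a x y z * Real.log (pyz y z)) = 0)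
    {x : α} {y : β} {z : ζ} (hx : 0 < pxz x z) (hy : 0 < pyz y z) : 0 < a x y z := by
  classical
  -- basic positivity facts
  have pxz0 : ∀ x z, 0 ≤ pxz x z := fun x z => (hpxz x z) ▸
    Finset.sum_nonneg fun y _ => a0 x y z
  have pyz0 : ∀ y z, 0 ≤ pyz y z := fun y z => (hpyz y z) ▸
    Finset.sum_nonneg fun x _ => a0 x y z
  have pz0 : ∀ z, 0 ≤ pz z := fun z => (hpz z) ▸
    Finset.sum_nonneg fun x _ => pxz0 x z
  have a_le_pxz : ∀ x y z, a x y z ≤ pxz x z := fun x y z => (hpxz x z) ▸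
    Finset.single_le_sum (fun y _ => a0 x y z) (Finset.mem_univ y)
  have a_le_pyz : ∀ x y z, a x y z ≤ pyz y z := fun x y z => (hpyz y z) ▸
    Finset.single_le_sum (fun x _ => a0 x y z) (Finset.mem_univ x)
  have pxz_le_pz : ∀ x z, pxz x z ≤ pz z := fun x z => (hpz z) ▸
    Finset.single_le_sum (fun x _ => pxz0 x z) (Finset.mem_univ x)
  set b : α → β → ζ → ℝ := fun x y z => pxz x z * pyz y z / pz z with hb
  have b0 : ∀ x y z, 0 ≤ b x y z := fun x y z =>
    div_nonneg (mul_nonneg (pxz0 x z) (pyz0 y z)) (pz0 z)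
  set b' : α → β → ζ → ℝ := fun x y z => if 0 < a x y z then b x y z else 0 with hb'
  -- positivity chain when a > 0
  have chain : ∀ x y z, 0 < a x y z →
      0 < pxz x z ∧ 0 < pyz y z ∧ 0 < pz z ∧ 0 < b x y z := by
    intro x y z h0
    have h1 : 0 < pxz x z := lt_of_lt_of_le h0 (a_le_pxz x y z)
    have h2 : 0 < pyz y z := lt_of_lt_of_le h0 (a_le_pyz x y z)
    have h3 : 0 < pz z := lt_of_lt_of_le h1 (pxz_le_pz x z)
    exact ⟨h1, h2, h3, div_pos (mul_pos h1 h2) h3⟩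
  -- rewrite hsum as KL sum
  have hcb : ∑ x, ∑ y, ∑ z, a x y z * (Real.log (a x y z) - Real.log (b x y z)) = 0 := by
    rw [← hsum]
    refine Finset.sum_congr rfl fun x _ => Finset.sum_congr rfl fun y _ =>
      Finset.sum_congr rfl fun z _ => ?_
    by_cases h0 : 0 < a x y z
    · obtain ⟨h1, h2, h3, _⟩ := chain x y z h0
      have : Real.log (b x y z) = Real.log (pxz x z) + Real.log (pyz y z) - Real.log (pz z) := by
        rw [hb]
        simp only
        rw [Real.log_div (mul_ne_zero h1.ne' h2.ne') h3.ne', Real.log_mul h1.ne' h2.ne']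
      rw [this]; ring
    · have h0' : a x y z = 0 := le_antisymm (not_lt.mp h0) (a0 x y z)
      simp [h0']
  -- termwise Gibbs inequality
  have hterm : ∀ x y z, a x y z - b' x y z
      ≤ a x y z * (Real.log (a x y z) - Real.log (b x y z)) := by
    intro x y z
    by_cases h0 : 0 < a x y z
    · obtain ⟨h1, h2, h3, hbpos⟩ := chain x y z h0
      have hb'e : b' x y z = b x y z := if_pos h0
      have hlog := Real.log_le_sub_one_of_pos (div_pos hbpos h0)
      have hmul : a x y z * Real.log (b x y z / a x y z)
          ≤ a x y z * (b x y z / a x y z - 1) := by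
        exact mul_le_mul_of_nonneg_left hlog h0.le
      have e1 : a x y z * (b x y z / a x y z - 1) = b x y z - a x y z := by
        field_simp
      have e2 : Real.log (b x y z / a x y z) = Real.log (b x y z) - Real.log (a x y z) :=
        Real.log_div hbpos.ne' h0.ne'
      rw [hb'e]
      rw [e2, e1] at hmul
      nlinarith [hmul]
    · have h0' : a x y z = 0 := le_antisymm (not_lt.mp h0) (a0 x y z)
      simp [h0', hb']
  -- sum of b equals 1
  have sumb : ∑ x, ∑ y, ∑ z, b x y z = 1 := by
    have sw1 : ∀ x : α, ∑ y, ∑ z, b x y z = ∑ z, ∑ y, b x y z := fun x => Finset.sum_comm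
    have sw2 : ∑ x, ∑ z, ∑ y, b x y z = ∑ z, ∑ x, ∑ y, b x y z := Finset.sum_comm
    have hz : ∀ z, ∑ x, ∑ y, b x y z = pz z := by
      intro z
      by_cases h3 : pz z = 0
      · have hx0 : ∀ x, pxz x z = 0 := by
          intro x'
          have := (hpz z).symm.trans h3
          exact (Finset.sum_eq_zero_iff_of_nonneg (fun x' _ => pxz0 x' z)).mp this x'
            (Finset.mem_univ x')
        rw [h3]
        refine Finset.sum_eq_zero fun x' _ => Finset.sum_eq_zero fun y' _ => ?_
        rw [hb]; simp [hx0 x']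
      · have inner : ∀ x' : α, ∑ y', b x' y' z = pxz x' z := by
          intro x'
          have : ∑ y', b x' y' z = pxz x' z * (∑ y', pyz y' z) / pz z := by
            rw [hb]
            simp only
            rw [← Finset.sum_div, ← Finset.mul_sum]
          rw [this, ← hpz' z, mul_div_assoc, div_self h3, mul_one]
        rw [Finset.sum_congr rfl fun x' _ => inner x', ← hpz z]
    rw [Finset.sum_congr rfl fun x _ => sw1 x, sw2,
      Finset.sum_congr rfl fun z _ => hz z, sumpz]
  -- b' ≤ b pointwise
  have hb'le : ∀ x y z, b' x y z ≤ b x y z := by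
    intro x y z
    by_cases h0 : 0 < a x y z
    · simp only [hb']
      rw [if_pos h0]
    · simp only [hb']
      rw [if_neg h0]
      exact b0 x y z
  -- 1 ≤ ∑ b'
  have hsum1 : (1:ℝ) - ∑ x, ∑ y, ∑ z, b' x y z ≤ 0 := by
    have := triple_sum_le hterm
    rw [hcb, triple_sum_sub, suma] at this
    linarith
  have hsum2 : ∑ x, ∑ y, ∑ z, b' x y z ≤ 1 := by
    rw [← sumb]; exact triple_sum_le hb'le
  have hbb' : ∀ x y z, b x y z - b' x y z = 0 := by
    refine triple_sum_eq_zero (fun x y z => by linarith [hb'le x y z]) ?_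
    rw [triple_sum_sub, sumb]
    linarith
  -- conclude
  have h3 : 0 < pz z := lt_of_lt_of_le hx (pxz_le_pz x z)
  have hbpos : 0 < b x y z := div_pos (mul_pos hx hy) h3
  by_contra hcon
  have h0' : ¬ 0 < a x y z := hcon
  have : b' x y z = 0 := by simp only [hb']; rw [if_neg h0']
  have := hbb' x y z
  rw [‹b' x y z = 0›] at this
  linarith

end KL
section Bridge

variable {Ω : Type*} [Fintype Ω]

lemma support_prod_of_cmi_zero {α β ζ : Type*} [Fintype α] [Fintype β] [Fintype ζ]
    {p : Ω → ℝ} (hp : IsPMF p) (X : Ω → α) (Y : Ω → β) (Z : Ω → ζ)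
    (h : cmi p X Y Z = 0) {x : α} {y : β} {z : ζ}
    (hx : 0 < dist' p (fun ω => (X ω, Z ω)) (x, z))
    (hy : 0 < dist' p (fun ω => (Y ω, Z ω)) (y, z)) :
    0 < dist' p (fun ω => ((X ω, Y ω), Z ω)) ((x, y), z) := by
  classical
  have key1 : ∀ (x : α) (z : ζ),
      ∑ y, dist' p (fun ω => ((X ω, Y ω), Z ω)) ((x, y), z)
        * Real.log (dist' p (fun ω => (X ω, Z ω)) (x, z))
      = dist' p (fun ω => (X ω, Z ω)) (x, z)
        * Real.log (dist' p (fun ω => (X ω, Z ω)) (x, z)) := by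
    intro x z
    rw [← Finset.sum_mul, ← marg_snd3 p X Y Z x z]
  have key2 : ∀ (y : β) (z : ζ),
      ∑ x, dist' p (fun ω => ((X ω, Y ω), Z ω)) ((x, y), z)
        * Real.log (dist' p (fun ω => (Y ω, Z ω)) (y, z))
      = dist' p (fun ω => (Y ω, Z ω)) (y, z)
        * Real.log (dist' p (fun ω => (Y ω, Z ω)) (y, z)) := by
    intro y z
    rw [← Finset.sum_mul, ← marg_fst3 p X Y Z y z]
  have key4 : ∀ (z : ζ),
      ∑ x, ∑ y, dist' p (fun ω => ((X ω, Y ω), Z ω)) ((x, y), z)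
        * Real.log (dist' p Z z)
      = dist' p Z z * Real.log (dist' p Z z) := by
    intro z
    calc ∑ x, ∑ y, dist' p (fun ω => ((X ω, Y ω), Z ω)) ((x, y), z)
          * Real.log (dist' p Z z)
        = ∑ x, dist' p (fun ω => (X ω, Z ω)) (x, z) * Real.log (dist' p Z z) := by
          refine Finset.sum_congr rfl fun x _ => ?_
          rw [← Finset.sum_mul, ← marg_snd3 p X Y Z x z]
      _ = dist' p Z z * Real.log (dist' p Z z) := by
          rw [← Finset.sum_mul, ← marg_fst2 p X Z z]
  have hE3 : ent p (fun ω => ((X ω, Y ω), Z ω)) * Real.log 2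
      = -∑ x, ∑ y, ∑ z, dist' p (fun ω => ((X ω, Y ω), Z ω)) ((x, y), z)
          * Real.log (dist' p (fun ω => ((X ω, Y ω), Z ω)) ((x, y), z)) := by
    rw [ent_mul_log2]
    simp only [Fintype.sum_prod_type]
  have hE1 : ent p (fun ω => (X ω, Z ω)) * Real.log 2
      = -∑ x, ∑ y, ∑ z, dist' p (fun ω => ((X ω, Y ω), Z ω)) ((x, y), z)
          * Real.log (dist' p (fun ω => (X ω, Z ω)) (x, z)) := by
    rw [ent_mul_log2]
    simp only [Fintype.sum_prod_type]
    rw [neg_inj]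
    refine Finset.sum_congr rfl fun x _ => ?_
    calc ∑ z, dist' p (fun ω => (X ω, Z ω)) (x, z)
          * Real.log (dist' p (fun ω => (X ω, Z ω)) (x, z))
        = ∑ z, ∑ y, dist' p (fun ω => ((X ω, Y ω), Z ω)) ((x, y), z)
            * Real.log (dist' p (fun ω => (X ω, Z ω)) (x, z)) :=
          Finset.sum_congr rfl fun z _ => (key1 x z).symm
      _ = ∑ y, ∑ z, dist' p (fun ω => ((X ω, Y ω), Z ω)) ((x, y), z)
            * Real.log (dist' p (fun ω => (X ω, Z ω)) (x, z)) := Finset.sum_comm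
  have hE2 : ent p (fun ω => (Y ω, Z ω)) * Real.log 2
      = -∑ x, ∑ y, ∑ z, dist' p (fun ω => ((X ω, Y ω), Z ω)) ((x, y), z)
          * Real.log (dist' p (fun ω => (Y ω, Z ω)) (y, z)) := by
    rw [ent_mul_log2]
    simp only [Fintype.sum_prod_type]
    rw [neg_inj]
    calc ∑ y, ∑ z, dist' p (fun ω => (Y ω, Z ω)) (y, z)
          * Real.log (dist' p (fun ω => (Y ω, Z ω)) (y, z))
        = ∑ y, ∑ z, ∑ x, dist' p (fun ω => ((X ω, Y ω), Z ω)) ((x, y), z)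
            * Real.log (dist' p (fun ω => (Y ω, Z ω)) (y, z)) :=
          Finset.sum_congr rfl fun y _ => Finset.sum_congr rfl fun z _ => (key2 y z).symm
      _ = ∑ y, ∑ x, ∑ z, dist' p (fun ω => ((X ω, Y ω), Z ω)) ((x, y), z)
            * Real.log (dist' p (fun ω => (Y ω, Z ω)) (y, z)) :=
          Finset.sum_congr rfl fun y _ => Finset.sum_comm
      _ = ∑ x, ∑ y, ∑ z, dist' p (fun ω => ((X ω, Y ω), Z ω)) ((x, y), z)
            * Real.log (dist' p (fun ω => (Y ω, Z ω)) (y, z)) := Finset.sum_comm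
  have hE4 : ent p Z * Real.log 2
      = -∑ x, ∑ y, ∑ z, dist' p (fun ω => ((X ω, Y ω), Z ω)) ((x, y), z)
          * Real.log (dist' p Z z) := by
    rw [ent_mul_log2]
    rw [neg_inj]
    calc ∑ z, dist' p Z z * Real.log (dist' p Z z)
        = ∑ z, ∑ x, ∑ y, dist' p (fun ω => ((X ω, Y ω), Z ω)) ((x, y), z)
            * Real.log (dist' p Z z) :=
          Finset.sum_congr rfl fun z _ => (key4 z).symm
      _ = ∑ x, ∑ z, ∑ y, dist' p (fun ω => ((X ω, Y ω), Z ω)) ((x, y), z)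
            * Real.log (dist' p Z z) := Finset.sum_comm
      _ = ∑ x, ∑ y, ∑ z, dist' p (fun ω => ((X ω, Y ω), Z ω)) ((x, y), z)
            * Real.log (dist' p Z z) :=
          Finset.sum_congr rfl fun x _ => Finset.sum_comm
  have hmul := congrArg (fun t => t * Real.log 2) h
  simp only [cmi, sub_mul, add_mul, zero_mul] at hmul
  have hsum : ∑ x, ∑ y, ∑ z,
      (dist' p (fun ω => ((X ω, Y ω), Z ω)) ((x, y), z)
          * Real.log (dist' p (fun ω => ((X ω, Y ω), Z ω)) ((x, y), z))
        + dist' p (fun ω => ((X ω, Y ω), Z ω)) ((x, y), z) * Real.log (dist' p Z z)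
        - dist' p (fun ω => ((X ω, Y ω), Z ω)) ((x, y), z)
          * Real.log (dist' p (fun ω => (X ω, Z ω)) (x, z))
        - dist' p (fun ω => ((X ω, Y ω), Z ω)) ((x, y), z)
          * Real.log (dist' p (fun ω => (Y ω, Z ω)) (y, z))) = 0 := by
    simp only [Finset.sum_sub_distrib, Finset.sum_add_distrib]
    linarith [hE1, hE2, hE3, hE4, hmul]
  have suma : ∑ x, ∑ y, ∑ z, dist' p (fun ω => ((X ω, Y ω), Z ω)) ((x, y), z) = 1 := by
    have h1 : ∑ v : (α × β) × ζ, dist' p (fun ω => ((X ω, Y ω), Z ω)) v = 1 := by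
      rw [sum_dist', hp.2]
    simpa only [Fintype.sum_prod_type] using h1
  have sumpz : ∑ z, dist' p Z z = 1 := by rw [sum_dist', hp.2]
  exact kl_support
    (fun x y z => dist' p (fun ω => ((X ω, Y ω), Z ω)) ((x, y), z))
    (fun x z => dist' p (fun ω => (X ω, Z ω)) (x, z))
    (fun y z => dist' p (fun ω => (Y ω, Z ω)) (y, z))
    (fun z => dist' p Z z)
    (fun x y z => dist'_nonneg hp.1 _ _)
    (fun x z => marg_snd3 p X Y Z x z)
    (fun y z => marg_fst3 p X Y Z y z)
    (fun z => marg_fst2 p X Z z)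
    (fun z => marg_fst2 p Y Z z)
    suma sumpz hsum hx hy

end Bridge
section Final

variable {Ω : Type*} [Fintype Ω]

lemma exists_of_dist'_pos {α : Type*} {p : Ω → ℝ} {A : Ω → α} {v : α}
    (h : 0 < dist' p A v) : ∃ ω, p ω ≠ 0 ∧ A ω = v := by
  by_contra hc
  push_neg at hc
  have : dist' p A v = 0 := by
    refine Finset.sum_eq_zero fun ω _ => ?_
    by_cases hω : p ω = 0
    · simp [hω]
    · rw [if_neg (hc ω hω)]
  linarith

lemma asFun_postcomp {α β γ : Type*} {p : Ω → ℝ} (hp : IsPMF p) {A : Ω → α} {B : Ω → β}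
    (h : asFun p A B) (φ : β → γ) : asFun p A (fun ω => φ (B ω)) := by
  rw [asFun_iff hp] at h ⊢
  obtain ⟨f, hf⟩ := h
  exact ⟨fun a => φ (f a), fun ω hω => by simp only []; rw [hf ω hω]⟩

lemma asFun_Z_of_common {α β ζ δ : Type*} [Fintype α] [Fintype β] [Fintype ζ]
    {p : Ω → ℝ} (hp : IsPMF p) (X : Ω → α) (Y : Ω → β) (Z : Ω → ζ)
    (hZ : cmi p X Y Z = 0) {V : Ω → δ}
    (hVX : asFun p X V) (hVY : asFun p Y V) : asFun p Z V := by
  classical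
  have hΩ : Nonempty Ω := by
    by_contra hne
    have : ∑ ω, p ω = 0 := by
      rw [Finset.sum_eq_zero]
      intro ω _
      exact absurd ⟨ω⟩ hne
    rw [hp.2] at this
    linarith
  obtain ⟨f, hf⟩ := (asFun_iff hp X V).mp hVX
  obtain ⟨g, hg⟩ := (asFun_iff hp Y V).mp hVY
  rw [asFun_iff hp]
  refine ⟨fun z => if hz : ∃ ω, p ω ≠ 0 ∧ Z ω = z then f (X (Classical.choose hz))
    else f (X (Classical.arbitrary Ω)), fun ω hω => ?_⟩
  have hz : ∃ ω', p ω' ≠ 0 ∧ Z ω' = Z ω := ⟨ω, hω, rfl⟩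
  simp only []
  rw [dif_pos hz]
  obtain ⟨hω', hzz⟩ := Classical.choose_spec hz
  set ω' := Classical.choose hz with hω'def
  have hpω : 0 < p ω := lt_of_le_of_ne (hp.1 ω) (Ne.symm hω)
  have hpω' : 0 < p ω' := lt_of_le_of_ne (hp.1 ω') (Ne.symm hω')
  have hx' : 0 < dist' p (fun ω => (X ω, Z ω)) (X ω', Z ω) := by
    have h1 := single_le_dist' hp.1 (fun ω => (X ω, Z ω)) ω'
    rw [hzz] at h1
    exact lt_of_lt_of_le hpω' h1
  have hy' : 0 < dist' p (fun ω => (Y ω, Z ω)) (Y ω, Z ω) :=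
    lt_of_lt_of_le hpω (single_le_dist' hp.1 (fun ω => (Y ω, Z ω)) ω)
  have hprod := support_prod_of_cmi_zero hp X Y Z hZ hx' hy'
  obtain ⟨ω'', hω'', heq⟩ := exists_of_dist'_pos hprod
  have e1 : X ω'' = X ω' := congrArg (Prod.fst ∘ Prod.fst) heq
  have e2 : Y ω'' = Y ω := congrArg (Prod.snd ∘ Prod.fst) heq
  calc f (X ω') = f (X ω'') := by rw [e1]
    _ = V ω'' := hf ω'' hω''
    _ = g (Y ω'') := (hg ω'' hω'').symm
    _ = g (Y ω) := by rw [e2]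
    _ = V ω := hg ω hω

end Final

/-- `H(mcf(X,Y)) = H(mcf(g₁(X), g₂(Y)))` under the sufficiency Markov chains. -/
theorem stmt8 {Ω 𝒳 𝒴 γ₁ γ₂ γ₃ γ₄ : Type*} [Fintype Ω] [Fintype 𝒳] [Fintype 𝒴]
    [Fintype γ₁] [Fintype γ₂] [Fintype γ₃] [Fintype γ₄]
    (p : Ω → ℝ) (hp : IsPMF p) (X : Ω → 𝒳) (Y : Ω → 𝒴)
    (g₁ : 𝒳 → γ₁) (g₂ : 𝒴 → γ₂)
    (hg₁ : cmi p X Y (fun ω => g₁ (X ω)) = 0)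
    (hg₂ : cmi p X Y (fun ω => g₂ (Y ω)) = 0)
    (M : Ω → γ₃) (M' : Ω → γ₄)
    (hM : IsMCF p X Y M)
    (hM' : IsMCF p (fun ω => g₁ (X ω)) (fun ω => g₂ (Y ω)) M') :
    ent p M = ent p M' := by
  classical
  obtain ⟨hMX, hMY, hMmax⟩ := hM
  obtain ⟨hM'g1, hM'g2, hM'max⟩ := hM'
  -- M' is a.s. a function of X and of Y
  have hM'X : asFun p X M' := by
    obtain ⟨f, hf⟩ := hM'g1
    exact ⟨fun x => f (g₁ x), hf⟩
  have hM'Y : asFun p Y M' := by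
    obtain ⟨f, hf⟩ := hM'g2
    exact ⟨fun y => f (g₂ y), hf⟩
  -- asFun p M M' (via shrinking γ₄ to Fin n)
  have hMM' : asFun p M M' := by
    let e := Fintype.equivFin γ₄
    have h1 : asFun p X (fun ω => e (M' ω)) := asFun_postcomp hp hM'X e
    have h2 : asFun p Y (fun ω => e (M' ω)) := asFun_postcomp hp hM'Y e
    have h3 := hMmax (Fin (Fintype.card γ₄)) (fun ω => e (M' ω)) h1 h2
    have h4 := asFun_postcomp hp h3 e.symm
    have h5 : (fun ω => e.symm (e (M' ω))) = M' := by
      funext ω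
      simp
    rwa [h5] at h4
  -- M is a.s. a function of g₁(X) and of g₂(Y)
  have hMg1 : asFun p (fun ω => g₁ (X ω)) M :=
    asFun_Z_of_common hp X Y (fun ω => g₁ (X ω)) hg₁ hMX hMY
  have hMg2 : asFun p (fun ω => g₂ (Y ω)) M :=
    asFun_Z_of_common hp X Y (fun ω => g₂ (Y ω)) hg₂ hMX hMY
  -- asFun p M' M (via shrinking γ₃ to Fin n)
  have hM'M : asFun p M' M := by
    let e := Fintype.equivFin γ₃
    have h1 : asFun p (fun ω => g₁ (X ω)) (fun ω => e (M ω)) := asFun_postcomp hp hMg1 e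
    have h2 : asFun p (fun ω => g₂ (Y ω)) (fun ω => e (M ω)) := asFun_postcomp hp hMg2 e
    have h3 := hM'max (Fin (Fintype.card γ₃)) (fun ω => e (M ω)) h1 h2
    have h4 := asFun_postcomp hp h3 e.symm
    have h5 : (fun ω => e.symm (e (M ω))) = M := by
      funext ω
      simp
    rwa [h5] at h4
  exact ent_eq_of_asFun_asFun hp hMM' hM'M
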